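/- arXiv:0806.0437 — 2 statements merged into one kernel-verified Lean document; each statement's English description precedes it below -/
import Mathlib

section
/- Let $\mu$ be a Radon measure on a locally compact Hausdorff space $X$ (e.g. a manifold) such that for all continuous compactly supported functions $\varphi, \psi \ge 0$ with $\varphi\cdot\psi = 0$ one has $(\int \varphi\,d\mu)(\int \psi\,d\mu) = 0$. Then $\mu$ is a point measure: there exist $c \in [0,\infty)$ and $p \in X$ such that $\int \varphi\,d\mu = c\,\varphi(p)$ for every continuous compactly supported $\varphi$. -/
open MeasureTheory Set

set_option linter.unusedSectionVars false

section Helpers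
variable {X : Type*} [TopologicalSpace X] [T2Space X] [LocallyCompactSpace X]
    [MeasurableSpace X] [BorelSpace X]

/-- Bump function: for `a ∈ U` open, a continuous compactly supported `f`
with `0 ≤ f ≤ 1`, `f = 0` outside `U`, and `f = 1` on an open nbhd of `a`. -/
lemma exists_bump {a : X} {U : Set X} (hU : IsOpen U) (haU : a ∈ U) :
    ∃ f : X → ℝ, Continuous f ∧ HasCompactSupport f ∧ (∀ x, 0 ≤ f x) ∧
      (∀ x ∉ U, f x = 0) ∧ ∃ W : Set X, IsOpen W ∧ a ∈ W ∧ EqOn f 1 W := by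
  obtain ⟨K, hK, haK, hKU⟩ := exists_compact_subset hU haU
  obtain ⟨f, hf1, hf0, hfc, hf01⟩ := exists_continuous_one_zero_of_isCompact hK
    hU.isClosed_compl (disjoint_compl_right_iff_subset.mpr hKU)
  exact ⟨f, f.continuous, hfc, fun x => (hf01 x).1, fun x hx => hf0 hx,
    interior K, isOpen_interior, haK, fun x hx => hf1 (interior_subset hx)⟩

lemma integral_pos_of_bump (μ : Measure X) [IsFiniteMeasureOnCompacts μ]
    {f : X → ℝ} (hf : Continuous f) (hfc : HasCompactSupport f)
    (hf0 : ∀ x, 0 ≤ f x) {W : Set X} (hW : IsOpen W) (hWf : EqOn f 1 W)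
    (hμW : μ W ≠ 0) : 0 < ∫ x, f x ∂μ := by
  have hint : Integrable f μ := hf.integrable_of_hasCompactSupport hfc
  have hWs : W ⊆ tsupport f := fun x hx =>
    subset_tsupport f (by simp [Function.mem_support, hWf hx])
  have hWfin : μ W < ⊤ := lt_of_le_of_lt (measure_mono hWs) hfc.measure_lt_top
  have h1 : (μ W).toReal ≤ ∫ x, f x ∂μ := by
    calc (μ W).toReal = ∫ x in W, (1 : ℝ) ∂μ := by
          simp [hWfin.ne, Measure.real]
      _ = ∫ x in W, f x ∂μ :=
          (setIntegral_congr_fun hW.measurableSet (fun x hx => (hWf hx).symm))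
      _ ≤ ∫ x, f x ∂μ :=
          setIntegral_le_integral hint (Filter.Eventually.of_forall hf0)
  exact lt_of_lt_of_le (ENNReal.toReal_pos hμW hWfin.ne) h1

lemma compact_null_of_local_null (μ : Measure X) {K : Set X} (hK : IsCompact K)
    (hloc : ∀ x ∈ K, ∃ U : Set X, IsOpen U ∧ x ∈ U ∧ μ U = 0) : μ K = 0 := by
  have hloc' : ∀ x : X, ∃ U : Set X, IsOpen U ∧ (x ∈ K → x ∈ U) ∧ μ U = 0 := by
    intro x
    by_cases hx : x ∈ K
    · obtain ⟨U, h1, h2, h3⟩ := hloc x hx; exact ⟨U, h1, fun _ => h2, h3⟩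
    · exact ⟨∅, isOpen_empty, fun hx' => absurd hx' hx, measure_empty⟩
  choose U hUo hxU hU0 using hloc'
  obtain ⟨t, -, hfin, hcov⟩ := hK.elim_finite_subcover_image (fun x (_ : x ∈ K) => hUo x)
    (fun x hx => mem_biUnion hx (hxU x hx))
  refine measure_mono_null hcov ?_
  exact (measure_biUnion_null_iff hfin.countable).mpr (fun i _ => hU0 i)

end Helpers

/-- If `μ` is a Radon measure on a locally compact Hausdorff space
`X` such that `(∫ φ dμ)(∫ ψ dμ) = 0` for all continuous compactly supported
`φ, ψ ≥ 0` with `φ ⬝ ψ = 0`, then `μ` acts on `C_c(X)` as a nonnegative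
multiple of a Dirac measure: there are `c ∈ [0,∞)` and `p ∈ X` with
`∫ φ dμ = c φ(p)` for all continuous compactly supported `φ`. -/
theorem radon_measure_disjoint_product_eq_point_measure
    {X : Type*} [TopologicalSpace X] [T2Space X] [LocallyCompactSpace X]
    [Nonempty X] [MeasurableSpace X] [BorelSpace X]
    (μ : Measure X) [IsFiniteMeasureOnCompacts μ] [μ.InnerRegular]
    (h : ∀ φ ψ : X → ℝ, Continuous φ → HasCompactSupport φ →
      Continuous ψ → HasCompactSupport ψ →
      (∀ x, 0 ≤ φ x) → (∀ x, 0 ≤ ψ x) → (∀ x, φ x * ψ x = 0) →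
      (∫ x, φ x ∂μ) * (∫ x, ψ x ∂μ) = 0) :
    ∃ (c : ℝ) (p : X), 0 ≤ c ∧
      ∀ φ : X → ℝ, Continuous φ → HasCompactSupport φ →
        ∫ x, φ x ∂μ = c * φ p := by
  classical
  by_cases hp : ∃ p : X, ∀ U : Set X, IsOpen U → p ∈ U → μ U ≠ 0
  · obtain ⟨p, hp⟩ := hp
    -- every compact set avoiding p is null
    have hK0 : ∀ K : Set X, IsCompact K → p ∉ K → μ K = 0 := by
      intro K hK hpK
      by_contra hμK
      -- there is a point of positive local measure in K
      have : ∃ q ∈ K, ∀ U : Set X, IsOpen U → q ∈ U → μ U ≠ 0 := by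
        by_contra hq
        push_neg at hq
        exact hμK (compact_null_of_local_null μ hK (fun x hx => by
          obtain ⟨U, hUo, hxU, hU0⟩ := hq x hx
          exact ⟨U, hUo, hxU, hU0⟩))
      obtain ⟨q, hqK, hq⟩ := this
      have hpq : p ≠ q := fun e => hpK (e ▸ hqK)
      obtain ⟨U, V, hUo, hVo, hpU, hqV, hUV⟩ := t2_separation hpq
      obtain ⟨f, hfc, hfcs, hf0, hfU, W, hWo, hpW, hfW⟩ := exists_bump hUo hpU
      obtain ⟨g, hgc, hgcs, hg0, hgV, W', hW'o, hqW', hgW'⟩ := exists_bump hVo hqV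
      have hfg : ∀ x, f x * g x = 0 := by
        intro x
        by_cases hx : x ∈ U
        · rw [hgV x (fun hv => (hUV.le_bot ⟨hx, hv⟩)), mul_zero]
        · rw [hfU x hx, zero_mul]
      have := h f g hfc hfcs hgc hgcs hf0 hg0 hfg
      have h1 : 0 < ∫ x, f x ∂μ :=
        integral_pos_of_bump μ hfc hfcs hf0 hWo hfW (hp W hWo hpW)
      have h2 : 0 < ∫ x, g x ∂μ :=
        integral_pos_of_bump μ hgc hgcs hg0 hW'o hgW' (hq W' hW'o hqW')
      exact (mul_pos h1 h2).ne' this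
    -- any measurable set avoiding p is null, by inner regularity
    have hnull : ∀ A : Set X, MeasurableSet A → p ∉ A → μ A = 0 := by
      intro A hA hpA
      by_contra h0
      obtain ⟨K, hKA, hK, hμK⟩ := MeasureTheory.Measure.InnerRegular.innerRegular
        hA 0 (pos_iff_ne_zero.mpr h0)
      exact hμK.ne' (hK0 K hK (fun hpK => hpA (hKA hpK)))
    refine ⟨(μ {p}).toReal, p, ENNReal.toReal_nonneg, fun φ hφ hφc => ?_⟩
    have hae : φ =ᵐ[μ] ({p} : Set X).indicator φ := by
      have hsub : {x | φ x ≠ ({p} : Set X).indicator φ x} ⊆ tsupport φ \ {p} := by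
        intro x hx
        simp only [mem_setOf_eq] at hx
        constructor
        · by_contra hxs
          exact hx (by
            have h0 : φ x = 0 := image_eq_zero_of_notMem_tsupport hxs
            by_cases hxp : x ∈ ({p} : Set X) <;>
              simp [indicator, hxp, h0])
        · intro hxp
          exact hx (by simp [indicator, hxp])
      have : μ (tsupport φ \ {p}) = 0 :=
        hnull _ ((isClosed_tsupport φ).measurableSet.diff (measurableSet_singleton p))
          (fun hx => hx.2 rfl)
      exact measure_mono_null hsub this
    rw [integral_congr_ae hae, integral_indicator (measurableSet_singleton p),
      integral_singleton, smul_eq_mul]; rfl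
  · push_neg at hp
    refine ⟨0, Classical.arbitrary X, le_refl 0, fun φ hφ hφc => ?_⟩
    have hae : φ =ᵐ[μ] 0 := by
      have hts : μ (tsupport φ) = 0 :=
        compact_null_of_local_null μ hφc (fun x _ => hp x)
      exact measure_mono_null (fun x hx => subset_tsupport φ hx) hts
    rw [integral_congr_ae hae]; simp
end

section
/- Let $M$ be a connected Riemannian manifold and $N \subset M$ an open subset such that the $(d-1)$-dimensional Hausdorff measure of $M \setminus N$ is zero, where $d = \dim M$. Then $N$ is connected. -/
open MeasureTheory
open scoped NNReal

namespace OCHelper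

open Metric Set Module

/-- Nonempty open subsets of Euclidean space have nonzero `n`-dimensional
Hausdorff measure. -/
lemma hausdorff_open_ne_zero (n : ℕ) {O : Set (EuclideanSpace ℝ (Fin n))}
    (hO : IsOpen O) (hne : O.Nonempty) : μH[(n : ℝ)] O ≠ 0 := by
  have h : ((n : ℝ)) = ((Module.finrank ℝ (EuclideanSpace ℝ (Fin n)) : ℕ) : ℝ) := by
    rw [finrank_euclideanSpace_fin]
  rw [h]
  exact hO.measure_ne_zero _ hne

/-- Through some point of any nonempty open set there is a full line in direction `v`
avoiding a set of codimension-one Hausdorff measure zero. -/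
lemma exists_good_line (m : ℕ) {T : Set (EuclideanSpace ℝ (Fin (m + 1)))}
    (hT : μH[(m : ℝ)] T = 0) {v : EuclideanSpace ℝ (Fin (m + 1))} (hv : ‖v‖ = 1)
    {O : Set (EuclideanSpace ℝ (Fin (m + 1)))} (hO : IsOpen O) (hne : O.Nonempty) :
    ∃ z ∈ O, ∀ t : ℝ, z + t • v ∉ T := by
  by_contra hcon
  push_neg at hcon
  have hv0 : v ≠ 0 := by
    intro h; rw [h, norm_zero] at hv; norm_num at hv
  set W : Submodule ℝ (EuclideanSpace ℝ (Fin (m + 1))) := (ℝ ∙ v)ᗮ with hW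
  have hfin : Module.finrank ℝ W = m := by
    have h1 := Submodule.finrank_add_finrank_orthogonal (ℝ ∙ v)
    rw [finrank_span_singleton hv0, finrank_euclideanSpace_fin] at h1
    rw [hW]
    omega
  set e : W ≃ₗᵢ[ℝ] EuclideanSpace ℝ (Fin m) :=
    ((stdOrthonormalBasis ℝ W).reindex (finCongr hfin)).repr with he
  set P := W.orthogonalProjection with hP
  set q : EuclideanSpace ℝ (Fin (m + 1)) → EuclideanSpace ℝ (Fin m) :=
    fun z => e (P z) with hq
  have hvW : v ∈ Wᗮ :=
    Submodule.le_orthogonal_orthogonal _ (Submodule.mem_span_singleton_self v)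
  have hqv : ∀ (z : EuclideanSpace ℝ (Fin (m + 1))) (t : ℝ), q (z + t • v) = q z := by
    intro z t
    simp [hq, hP, map_add, _root_.map_smul,
      Submodule.orthogonalProjection_mem_subspace_orthogonalComplement_eq_zero hvW]
  have hqlip : LipschitzWith (1 * ‖(P : EuclideanSpace ℝ (Fin (m + 1)) →L[ℝ] W)‖₊) q :=
    e.isometry.lipschitz.comp (P : EuclideanSpace ℝ (Fin (m + 1)) →L[ℝ] W).lipschitz
  obtain ⟨z₀, hz₀⟩ := hne
  obtain ⟨r, hr, hball⟩ := Metric.isOpen_iff.mp hO z₀ hz₀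
  have hsurj : Metric.ball (q z₀) r ⊆ q '' T := by
    intro y hy
    set z : EuclideanSpace ℝ (Fin (m + 1)) :=
      z₀ + ((e.symm y : W) : EuclideanSpace ℝ (Fin (m + 1)))
        - ((P z₀ : W) : EuclideanSpace ℝ (Fin (m + 1))) with hz
    have hPz : P z = e.symm y := by
      rw [hz]
      simp [hP, map_add, map_sub, Submodule.orthogonalProjection_mem_subspace_eq_self,
        Submodule.orthogonalProjection_starProjection_of_le (le_refl W)]
    have hqz : q z = y := by
      rw [hq]; simp only []; rw [hPz, e.apply_symm_apply]
    have hzball : z ∈ Metric.ball z₀ r := by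
      rw [Metric.mem_ball, dist_eq_norm]
      have h1 : z - z₀ = ((e.symm y - P z₀ : W) : EuclideanSpace ℝ (Fin (m + 1))) := by
        rw [hz]; push_cast; abel
      rw [h1]
      have h2 : ‖((e.symm y - P z₀ : W) : EuclideanSpace ℝ (Fin (m + 1)))‖
          = ‖(e.symm y - P z₀ : W)‖ := rfl
      rw [h2, ← e.norm_map, map_sub, e.apply_symm_apply]
      have := Metric.mem_ball.mp hy
      rwa [dist_eq_norm] at this
    obtain ⟨t, ht⟩ := hcon z (hball hzball)
    exact ⟨z + t • v, ht, by rw [hqv, hqz]⟩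
  have himg : μH[(m : ℝ)] (q '' T) = 0 := by
    have h0 := hqlip.hausdorffMeasure_image_le (d := (m : ℝ)) (Nat.cast_nonneg m) T
    rw [hT, mul_zero] at h0
    exact le_antisymm h0 (zero_le)
  exact hausdorff_open_ne_zero m Metric.isOpen_ball (Metric.nonempty_ball.mpr hr)
    (measure_mono_null hsurj himg)

/-- An open set obtained by removing a codimension-one null set from an open ball
is preconnected. -/
lemma ball_diff_preconnected (m : ℕ) {c : EuclideanSpace ℝ (Fin (m + 1))} {ρ : ℝ}
    {T : Set (EuclideanSpace ℝ (Fin (m + 1)))} (hT : μH[(m : ℝ)] T = 0)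
    (hG : IsOpen (Metric.ball c ρ \ T)) : IsPreconnected (Metric.ball c ρ \ T) := by
  apply isPreconnected_of_forall_pair
  intro x hx y hy
  rcases eq_or_ne x y with rfl | hxy
  · exact ⟨{x}, singleton_subset_iff.mpr hx, rfl, rfl, subsingleton_singleton.isPreconnected⟩
  obtain ⟨δx, hδx, hbx⟩ := Metric.isOpen_iff.mp hG x hx
  obtain ⟨δy, hδy, hby⟩ := Metric.isOpen_iff.mp hG y hy
  set δ := min δx δy with hδ
  have hδ0 : 0 < δ := lt_min hδx hδy
  have hyx : y - x ≠ 0 := sub_ne_zero.mpr (Ne.symm hxy)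
  set v := ‖y - x‖⁻¹ • (y - x) with hv
  have hvn : ‖v‖ = 1 := by
    rw [hv, norm_smul, norm_inv, norm_norm, inv_mul_cancel₀ (norm_ne_zero_iff.mpr hyx)]
  obtain ⟨z, hzball, hline⟩ := exists_good_line m hT hvn (O := Metric.ball x δ)
    Metric.isOpen_ball (Metric.nonempty_ball.mpr hδ0)
  set z' := z + (y - x) with hz'
  have hz'ball : z' ∈ Metric.ball y δ := by
    rw [Metric.mem_ball] at hzball ⊢
    have h1 : dist z' y = dist z x := by
      rw [dist_eq_norm, dist_eq_norm, hz']
      congr 1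
      abel
    rw [h1]; exact hzball
  have hzG : z ∈ Metric.ball c ρ \ T := hbx (Metric.ball_subset_ball (min_le_left _ _) hzball)
  have hz'G : z' ∈ Metric.ball c ρ \ T := hby (Metric.ball_subset_ball (min_le_right _ _) hz'ball)
  have hseg : segment ℝ z z' ⊆ Metric.ball c ρ \ T := by
    intro w hw
    constructor
    · exact (convex_ball c ρ).segment_subset hzG.1 hz'G.1 hw
    · rw [segment_eq_image'] at hw
      obtain ⟨θ, hθ, rfl⟩ := hw
      have h1 : z' - z = y - x := by rw [hz']; abel
      rw [h1]
      show z + θ • (y - x) ∉ T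
      have h2 : z + θ • (y - x) = z + (θ * ‖y - x‖) • v := by
        rw [hv, smul_smul, mul_assoc, mul_inv_cancel₀ (norm_ne_zero_iff.mpr hyx), mul_one]
      rw [h2]
      exact hline _
  refine ⟨Metric.ball x δx ∪ (segment ℝ z z' ∪ Metric.ball y δy), ?_, ?_, ?_, ?_⟩
  · apply union_subset hbx (union_subset hseg hby)
  · exact Or.inl (Metric.mem_ball_self hδx)
  · exact Or.inr (Or.inr (Metric.mem_ball_self hδy))
  · have hinner : IsPreconnected (segment ℝ z z' ∪ Metric.ball y δy) :=
      IsPreconnected.union z' (right_mem_segment ℝ z z')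
        (Metric.ball_subset_ball (min_le_right _ _) hz'ball)
        (convex_segment z z').isPreconnected (convex_ball y δy).isPreconnected
    exact IsPreconnected.union z (Metric.ball_subset_ball (min_le_left _ _) hzball)
      (Or.inl (left_mem_segment ℝ z z')) (convex_ball x δx).isPreconnected hinner

/-- Local lemma: around any point of the manifold there are arbitrarily small open
neighbourhoods `O` such that `O ∩ N` is nonempty and preconnected. -/
lemma local_lemma {M : Type*} [MetricSpace M] [MeasurableSpace M] [BorelSpace M]
    (m : ℕ) {N : Set M} (hN : IsOpen N)
    (hnull : μH[(m : ℝ)] (Set.univ \ N) = 0)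
    {p : M} {U : Set M} {f : M → EuclideanSpace ℝ (Fin (m + 1))} {K : ℝ≥0}
    (hU : IsOpen U) (hpU : p ∈ U) (hK : 0 < K) (hlip : LipschitzOnWith K f U)
    (hanti : ∀ x ∈ U, ∀ y ∈ U, dist x y ≤ (K : ℝ) * dist (f x) (f y))
    (himg : IsOpen (f '' U))
    {O' : Set M} (hO' : IsOpen O') (hpO' : p ∈ O') :
    ∃ O : Set M, IsOpen O ∧ p ∈ O ∧ O ⊆ O' ∧ (O ∩ N).Nonempty ∧ IsPreconnected (O ∩ N) := by
  have hKR : (0 : ℝ) < (K : ℝ) := by exact_mod_cast hK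
  have hinj : Set.InjOn f U := by
    intro x hx y hy hxy
    have h1 := hanti x hx y hy
    rw [hxy, dist_self, mul_zero] at h1
    exact dist_le_zero.mp h1
  have hopen : ∀ s, s ⊆ U → IsOpen s → IsOpen (f '' s) := by
    intro s hsU hs
    rw [isOpen_iff_mem_nhds]
    rintro _ ⟨x, hxs, rfl⟩
    have hxU : x ∈ U := hsU hxs
    obtain ⟨r, hr, hball⟩ := Metric.isOpen_iff.mp hs x hxs
    have h1 : Metric.ball (f x) (r / K) ∩ (f '' U) ⊆ f '' s := by
      rintro _ ⟨hmem, w, hwU, rfl⟩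
      refine ⟨w, hball ?_, rfl⟩
      rw [Metric.mem_ball]
      calc dist w x ≤ K * dist (f w) (f x) := hanti w hwU x hxU
        _ < K * (r / K) := mul_lt_mul_of_pos_left (Metric.mem_ball.mp hmem) hKR
        _ = r := by field_simp
    exact Filter.mem_of_superset
      (Filter.inter_mem (Metric.ball_mem_nhds _ (div_pos hr hKR))
        (himg.mem_nhds ⟨x, hxU, rfl⟩)) h1
  set U' := U ∩ O' with hU'
  have hU'open : IsOpen U' := hU.inter hO'
  have hpU' : p ∈ U' := ⟨hpU, hpO'⟩
  have himgU' : IsOpen (f '' U') := hopen U' inter_subset_left hU'open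
  obtain ⟨ρ, hρ, hballU'⟩ := Metric.isOpen_iff.mp himgU' (f p) ⟨p, hpU', rfl⟩
  set O := U' ∩ f ⁻¹' Metric.ball (f p) ρ with hOdef
  have hOopen : IsOpen O := ContinuousOn.isOpen_inter_preimage
    (hlip.continuousOn.mono inter_subset_left) hU'open Metric.isOpen_ball
  have hpO : p ∈ O := ⟨hpU', Metric.mem_ball_self hρ⟩
  have hOU : O ⊆ U := fun x hx => hx.1.1
  have himgO : f '' O = Metric.ball (f p) ρ := by
    apply Subset.antisymm
    · rintro _ ⟨x, hx, rfl⟩; exact hx.2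
    · intro y hy
      obtain ⟨x, hxU', rfl⟩ := hballU' hy
      exact ⟨x, ⟨hxU', hy⟩, rfl⟩
  set T := f '' (O \ N) with hTdef
  have hTnull : μH[(m : ℝ)] T = 0 := by
    have h1 : μH[(m : ℝ)] (O \ N) = 0 :=
      measure_mono_null (diff_subset_diff_left (subset_univ O)) hnull
    have hsub : O \ N ⊆ U := fun x hx => hOU hx.1
    have h2 := (hlip.mono hsub).hausdorffMeasure_image_le
      (d := (m : ℝ)) (Nat.cast_nonneg m)
    rw [h1, mul_zero] at h2
    exact le_antisymm h2 (zero_le)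
  have hkey : f '' (O ∩ N) = Metric.ball (f p) ρ \ T := by
    apply Subset.antisymm
    · rintro _ ⟨x, ⟨hxO, hxN⟩, rfl⟩
      refine ⟨himgO ▸ ⟨x, hxO, rfl⟩, ?_⟩
      rintro ⟨w, hw, hfw⟩
      have hwx : w = x := hinj (hOU hw.1) (hOU hxO) hfw
      exact hw.2 (hwx ▸ hxN)
    · rintro y ⟨hy, hyT⟩
      have hy' : y ∈ f '' O := by rw [himgO]; exact hy
      obtain ⟨x, hxO, rfl⟩ := hy'
      by_cases hxN : x ∈ N
      · exact ⟨x, ⟨hxO, hxN⟩, rfl⟩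
      · exact absurd ⟨x, ⟨hxO, hxN⟩, rfl⟩ hyT
  have hGopen : IsOpen (Metric.ball (f p) ρ \ T) :=
    hkey ▸ hopen (O ∩ N) (fun x hx => hOU hx.1) (hOopen.inter hN)
  have hGpre : IsPreconnected (Metric.ball (f p) ρ \ T) :=
    ball_diff_preconnected m hTnull hGopen
  have hvex : ‖(EuclideanSpace.single (0 : Fin (m + 1)) (1 : ℝ))‖ = 1 := by simp
  obtain ⟨w, hwball, hwline⟩ := exists_good_line m hTnull hvex
    (O := Metric.ball (f p) ρ) Metric.isOpen_ball (Metric.nonempty_ball.mpr hρ)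
  have hwT : w ∉ T := by
    have h1 := hwline 0
    simpa using h1
  have hGne : (Metric.ball (f p) ρ \ T).Nonempty := ⟨w, hwball, hwT⟩
  haveI : Nonempty M := ⟨p⟩
  set g : EuclideanSpace ℝ (Fin (m + 1)) → M := Function.invFunOn f U with hg
  have hlg : LipschitzOnWith K g (f '' U) := by
    rw [lipschitzOnWith_iff_dist_le_mul]
    intro y hy y' hy'
    calc dist (g y) (g y')
        ≤ K * dist (f (g y)) (f (g y')) :=
          hanti _ (Function.invFunOn_mem hy) _ (Function.invFunOn_mem hy')
      _ = K * dist y y' := by rw [Function.invFunOn_eq hy, Function.invFunOn_eq hy']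
  have hsubimg : Metric.ball (f p) ρ \ T ⊆ f '' U := fun y hy =>
    image_mono inter_subset_left (hballU' hy.1)
  have hgcont : ContinuousOn g (Metric.ball (f p) ρ \ T) :=
    hlg.continuousOn.mono hsubimg
  have hginv : ∀ x ∈ O ∩ N, g (f x) = x := by
    intro x hx
    have hxU : x ∈ U := hOU hx.1
    have h1 : f x ∈ f '' U := ⟨x, hxU, rfl⟩
    exact hinj (Function.invFunOn_mem h1) hxU (Function.invFunOn_eq h1)
  have himgg : g '' (f '' (O ∩ N)) = O ∩ N := by
    rw [image_image, image_congr hginv, image_id']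
  have hfinal : IsPreconnected (O ∩ N) := by
    have h1 := hGpre.image g hgcont
    rw [← hkey, himgg] at h1
    exact h1
  have hOne : (O ∩ N).Nonempty := by
    have h1 : (f '' (O ∩ N)).Nonempty := by rw [hkey]; exact hGne
    exact h1.of_image
  exact ⟨O, hOopen, hpO, fun x hx => hx.1.2, hOne, hfinal⟩

end OCHelper

/-- Let `M` be a connected `d`-dimensional Riemannian manifold
(formalized as a connected metric measure space which is locally bi-Lipschitz
homeomorphic to open subsets of `ℝ^d`). If `N ⊆ M` is open and the
`(d-1)`-dimensional Hausdorff measure of `M \ N` vanishes, then `N` is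
connected. -/
theorem open_complement_hausdorff_null_connected
    {M : Type*} [MetricSpace M] [MeasurableSpace M] [BorelSpace M]
    [ConnectedSpace M] (d : ℕ)
    (hcharts : ∀ p : M, ∃ (U : Set M) (f : M → EuclideanSpace ℝ (Fin d))
      (K : ℝ≥0), IsOpen U ∧ p ∈ U ∧ 0 < K ∧ LipschitzOnWith K f U ∧
        (∀ x ∈ U, ∀ y ∈ U, dist x y ≤ (K : ℝ) * dist (f x) (f y)) ∧
        IsOpen (f '' U))
    (N : Set M) (hN : IsOpen N)
    (hnull : μH[(d : ℝ) - 1] (Set.univ \ N) = 0) :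
    IsPreconnected N := by
  cases d with
  | zero =>
    -- dimension 0 : the manifold is a single point
    haveI : Subsingleton (EuclideanSpace ℝ (Fin 0)) :=
      ⟨fun a b => by ext i; exact i.elim0⟩
    have hsing : ∀ p : M, IsOpen ({p} : Set M) := by
      intro p
      obtain ⟨U, f, K, hU, hpU, hK, hlip, hanti, himg⟩ := hcharts p
      have hUp : U = {p} := by
        apply Set.Subset.antisymm
        · intro x hx
          have h1 := hanti x hx p hpU
          rw [Subsingleton.elim (f x) (f p), dist_self, mul_zero] at h1
          exact dist_le_zero.mp h1
        · intro x hx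
          rw [Set.mem_singleton_iff] at hx
          rw [hx]; exact hpU
      rw [← hUp]; exact hU
    haveI : Subsingleton M := by
      constructor
      intro a b
      by_contra hab
      have hco : IsOpen ({a}ᶜ : Set M) := by
        rw [isOpen_iff_mem_nhds]
        intro q hq
        exact Filter.mem_of_superset ((hsing q).mem_nhds rfl)
          (Set.singleton_subset_iff.mpr hq)
      obtain ⟨c, _, hc1, hc2⟩ := isPreconnected_univ {a} ({a}ᶜ) (hsing a) hco
        (by intro x _; exact (em (x ∈ ({a} : Set M))).imp id id)
        ⟨a, Set.mem_univ a, rfl⟩ ⟨b, Set.mem_univ b, fun h => hab (Set.mem_singleton_iff.mp h).symm⟩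
      exact hc2 hc1
    exact (Set.subsingleton_of_subsingleton (s := N)).isPreconnected
  | succ m =>
    have hnull' : μH[(m : ℝ)] (Set.univ \ N) = 0 := by
      have hc : ((m + 1 : ℕ) : ℝ) - 1 = (m : ℝ) := by push_cast; ring
      rwa [hc] at hnull
    intro u v hu hv hcov hNu hNv
    obtain ⟨a, haN, hau⟩ := hNu
    obtain ⟨b, hbN, hbv⟩ := hNv
    by_contra hcon
    rw [Set.not_nonempty_iff_eq_empty] at hcon
    have hbasis : ∀ (p : M) (O' : Set M), IsOpen O' → p ∈ O' →
        ∃ O, IsOpen O ∧ p ∈ O ∧ O ⊆ O' ∧ (O ∩ N).Nonempty ∧ IsPreconnected (O ∩ N) := by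
      intro p O' hO' hpO'
      obtain ⟨U, f, K, hU, hpU, hK, hlip, hanti, himg⟩ := hcharts p
      exact OCHelper.local_lemma m hN hnull' hU hpU hK hlip hanti himg hO' hpO'
    set Wu : Set M := {p | ∃ O, IsOpen O ∧ p ∈ O ∧ (O ∩ N).Nonempty ∧ O ∩ N ⊆ u} with hWu
    set Wv : Set M := {p | ∃ O, IsOpen O ∧ p ∈ O ∧ (O ∩ N).Nonempty ∧ O ∩ N ⊆ v} with hWv
    have hWuo : IsOpen Wu := by
      rw [isOpen_iff_mem_nhds]
      rintro p ⟨O, hO1, hO2, hO3, hO4⟩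
      exact Filter.mem_of_superset (hO1.mem_nhds hO2) (fun q hq => ⟨O, hO1, hq, hO3, hO4⟩)
    have hWvo : IsOpen Wv := by
      rw [isOpen_iff_mem_nhds]
      rintro p ⟨O, hO1, hO2, hO3, hO4⟩
      exact Filter.mem_of_superset (hO1.mem_nhds hO2) (fun q hq => ⟨O, hO1, hq, hO3, hO4⟩)
    have hcover : ∀ p : M, p ∈ Wu ∪ Wv := by
      intro p
      obtain ⟨O, h1, h2, _, h4, h5⟩ := hbasis p Set.univ isOpen_univ trivial
      have hsub : O ∩ N ⊆ u ∪ v := fun x hx => hcov hx.2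
      by_cases hOu : (O ∩ N ∩ u).Nonempty
      · by_cases hOv : (O ∩ N ∩ v).Nonempty
        · obtain ⟨x, hx1, hx2⟩ := h5 u v hu hv hsub hOu hOv
          have hxmem : x ∈ N ∩ (u ∩ v) := ⟨hx1.2, hx2⟩
          rw [hcon] at hxmem
          exact absurd hxmem (Set.notMem_empty x)
        · exact Or.inl ⟨O, h1, h2, h4,
            fun x hx => (hsub hx).resolve_right (fun hv' => hOv ⟨x, hx, hv'⟩)⟩
      · exact Or.inr ⟨O, h1, h2, h4,
          fun x hx => (hsub hx).resolve_left (fun hu' => hOu ⟨x, hx, hu'⟩)⟩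
    have hdisj : ∀ p : M, p ∉ Wu ∩ Wv := by
      rintro p ⟨⟨O₁, hO₁, hp₁, _, hu₁⟩, ⟨O₂, hO₂, hp₂, _, hu₂⟩⟩
      obtain ⟨O, h1, h2, h3, h4, _⟩ := hbasis p (O₁ ∩ O₂) (hO₁.inter hO₂) ⟨hp₁, hp₂⟩
      obtain ⟨x, hxO, hxN⟩ := h4
      have hxu : x ∈ u := hu₁ ⟨(h3 hxO).1, hxN⟩
      have hxv : x ∈ v := hu₂ ⟨(h3 hxO).2, hxN⟩
      have hxmem : x ∈ N ∩ (u ∩ v) := ⟨hxN, hxu, hxv⟩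
      rw [hcon] at hxmem
      exact absurd hxmem (Set.notMem_empty x)
    have haWu : a ∈ Wu := ⟨N ∩ u, hN.inter hu, ⟨haN, hau⟩,
      ⟨a, ⟨haN, hau⟩, haN⟩, fun x hx => hx.1.2⟩
    have hbWv : b ∈ Wv := ⟨N ∩ v, hN.inter hv, ⟨hbN, hbv⟩,
      ⟨b, ⟨hbN, hbv⟩, hbN⟩, fun x hx => hx.1.2⟩
    obtain ⟨x, _, hx⟩ := isPreconnected_univ Wu Wv hWuo hWvo
      (fun p _ => hcover p) ⟨a, Set.mem_univ a, haWu⟩ ⟨b, Set.mem_univ b, hbWv⟩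
    exact hdisj x hx
end
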